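/- (Deviation of local averages from the global average.) Assume ℓ ≥ 2. For every φ : ℤ/kℤ → ℝ, Σ_{i∈ℤ/kℤ} Σ_{j=1}^{ℓ−1} ((a − a(i,j))/(ℓ−1))² ≤ c · |φ|_Γ². -/

import Mathlib

open Real Finset

noncomputable section

/-- The cycle distance on `ℤ/kℤ`. -/
def cycDist (k : ℕ) (p q : ZMod k) : ℕ := min (p - q).val (q - p).val

/-- The boundary seminorm squared, summed over unordered pairs of distinct elements. -/
def bSemiSq (k : ℕ) [NeZero k] (φ : ZMod k → ℝ) : ℝ :=
  (1 / 2) * ∑ p : ZMod k, ∑ q : ZMod k,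
    if p ≠ q then (φ p - φ q) ^ 2 / (cycDist k p q : ℝ) ^ 2 else 0

/-- The global average `a = (1/k) Σ_p φ(p)`. -/
def globalAvg (k : ℕ) [NeZero k] (φ : ZMod k → ℝ) : ℝ :=
  (1 / (k : ℝ)) * ∑ p : ZMod k, φ p

/-- The local average `a(i,j) = (1/(2j−1)) Σ_{h=−(j−1)}^{j−1} φ(i+h)`. -/
def localAvg (k : ℕ) (φ : ZMod k → ℝ) (i : ZMod k) (j : ℕ) : ℝ :=
  (1 / (2 * (j : ℝ) - 1)) * ∑ h ∈ Finset.Icc (-(j : ℤ) + 1) ((j : ℤ) - 1), φ (i + (h : ZMod k))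

lemma six_mul_sum_range_sq (n : ℕ) :
    6 * ∑ t ∈ Finset.range (n+1), t^2 = n*(n+1)*(2*n+1) := by
  induction n with
  | zero => simp
  | succ n ih =>
    rw [Finset.sum_range_succ, Nat.mul_add, ih]
    ring

lemma min_sq_sum_bound (k : ℕ) (hk : 1 ≤ k) :
    12 * ∑ t ∈ Finset.range k, (min t (k - t))^2 ≤ k^3 + 2*k := by
  obtain ⟨m, hm⟩ : ∃ m, 2*m ≤ k ∧ k ≤ 2*m+1 := ⟨k/2, by omega⟩
  have hm1 : m + 1 ≤ k := by omega
  have hsplit : ∑ t ∈ Finset.range k, (min t (k-t))^2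
      = ∑ t ∈ Finset.range (m+1), (min t (k-t))^2
        + ∑ t ∈ Finset.Ico (m+1) k, (min t (k-t))^2 := by
    rw [Finset.range_eq_Ico,
      ← Finset.sum_Ico_consecutive _ (Nat.zero_le _) hm1]
    rw [← Finset.range_eq_Ico]
  have h1 : ∑ t ∈ Finset.range (m+1), (min t (k-t))^2
      = ∑ t ∈ Finset.range (m+1), t^2 := by
    apply Finset.sum_congr rfl
    intro t ht
    simp only [Finset.mem_range] at ht
    have : min t (k - t) = t := by omega
    rw [this]
  have h2 : ∑ t ∈ Finset.Ico (m+1) k, (min t (k-t))^2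
      = ∑ s ∈ Finset.Ico 1 (k-m), s^2 := by
    apply Finset.sum_nbij' (i := fun t => k - t) (j := fun s => k - s)
    · intro a ha; simp only [Finset.mem_Ico] at *; omega
    · intro a ha; simp only [Finset.mem_Ico] at *; omega
    · intro a ha; simp only [Finset.mem_Ico] at *; omega
    · intro a ha; simp only [Finset.mem_Ico] at *; omega
    · intro a ha; simp only [Finset.mem_Ico] at ha
      have : min a (k - a) = k - a := by omega
      rw [this]
  have h3 : ∑ s ∈ Finset.Ico 1 (k-m), s^2 = ∑ s ∈ Finset.range (k-m), s^2 := by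
    rw [Finset.range_eq_Ico, ← Finset.sum_Ico_consecutive _ (Nat.zero_le 1) (by omega : 1 ≤ k - m)]
    simp
  obtain ⟨n, hn⟩ : ∃ n, k - m = n + 1 := ⟨k - m - 1, by omega⟩
  have hA := six_mul_sum_range_sq m
  have hB := six_mul_sum_range_sq n
  rw [hsplit, h1, h2, h3, hn]
  have hcase : (k = 2*m ∧ m = n + 1) ∨ (k = 2*m+1 ∧ n = m) := by omega
  rcases hcase with ⟨hk1, hk2⟩ | ⟨hk1, hk2⟩ <;> subst hk1 <;> subst hk2 <;>
    linarith [hA, hB]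

lemma cycDist_shift (k : ℕ) (p q : ZMod k) : cycDist k p q = cycDist k 0 (q - p) := by
  simp [cycDist, zero_sub, sub_zero, neg_sub]

lemma cycDist_zero_val (k : ℕ) [NeZero k] (r : ZMod k) :
    cycDist k 0 r = min r.val (k - r.val) := by
  by_cases hr : r = 0
  · subst hr; simp [cycDist]
  · haveI : NeZero r := ⟨hr⟩
    have h1 : (-r).val = k - r.val := ZMod.val_neg_of_ne_zero r
    simp only [cycDist, zero_sub, sub_zero, h1]
    omega

lemma sum_cycDist_sq_nat (k : ℕ) [NeZero k] (p : ZMod k) :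
    ∑ q : ZMod k, (cycDist k p q)^2 = ∑ t ∈ Finset.range k, (min t (k - t))^2 := by
  have h1 : ∑ q : ZMod k, (cycDist k p q)^2 = ∑ r : ZMod k, (cycDist k 0 r)^2 :=
    Fintype.sum_equiv (Equiv.subRight p) _ _ (fun q => by rw [cycDist_shift]; rfl)
  rw [h1]
  rw [show (fun r : ZMod k => (cycDist k 0 r)^2) = fun r => (min r.val (k - r.val))^2 from
    funext fun r => by rw [cycDist_zero_val]]
  apply Finset.sum_nbij' (i := fun r : ZMod k => r.val) (j := fun t : ℕ => (t : ZMod k))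
  · intro a _; exact Finset.mem_range.mpr (ZMod.val_lt a)
  · intro a _; exact Finset.mem_univ _
  · intro a _; exact ZMod.natCast_rightInverse a
  · intro a ha; exact ZMod.val_cast_of_lt (Finset.mem_range.mp ha)
  · intro a _; rfl

lemma cycDist_pos (k : ℕ) [NeZero k] {p q : ZMod k} (h : p ≠ q) : 0 < cycDist k p q := by
  have h1 : p - q ≠ 0 := sub_ne_zero.mpr h
  have h2 : q - p ≠ 0 := sub_ne_zero.mpr (Ne.symm h)
  have := ZMod.val_pos.mpr h1
  have := ZMod.val_pos.mpr h2
  simp only [cycDist]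
  omega

theorem local_average_deviation (k ℓ c : ℕ) [NeZero k]
    (h1 : 4 * ℓ < k) (h2 : k < 2 * c * ℓ) (hℓ : 2 ≤ ℓ)
    (φ : ZMod k → ℝ) :
    ∑ i : ZMod k, ∑ j ∈ Finset.Icc 1 (ℓ - 1),
      ((globalAvg k φ - localAvg k φ i j) / ((ℓ : ℝ) - 1)) ^ 2
      ≤ (c : ℝ) * bSemiSq k φ := by
  have hk9 : 9 ≤ k := by omega
  have hkR : (9:ℝ) ≤ (k:ℝ) := by exact_mod_cast hk9
  have hkpos : (0:ℝ) < (k:ℝ) := by linarith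
  set B := bSemiSq k φ with hBdef
  set T : ZMod k → ℝ := fun p => ∑ q : ZMod k,
    if p ≠ q then (φ p - φ q)^2/((cycDist k p q : ℝ))^2 else 0 with hTdef
  have hT0 : ∀ p, 0 ≤ T p := by
    intro p
    apply Finset.sum_nonneg
    intro q _
    by_cases h : p ≠ q
    · rw [if_pos h]; positivity
    · rw [if_neg h]
  have hB0 : 0 ≤ B := by
    rw [hBdef, bSemiSq]
    have : (0:ℝ) ≤ ∑ p : ZMod k, T p := Finset.sum_nonneg fun p _ => hT0 p
    rw [hTdef] at this
    linarith
  have hTsum : ∑ p : ZMod k, T p = 2 * B := by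
    rw [hBdef, bSemiSq, hTdef]; ring
  set U : ZMod k → ℝ := fun p => ∑ q : ZMod k, (φ q - φ p) with hUdef
  set Dm : ℝ := ((k:ℝ)^3 + 2*(k:ℝ))/12 with hDm
  have hDm0 : 0 ≤ Dm := by rw [hDm]; positivity
  -- the sum of squared distances is at most Dm
  have hDsum : ∀ p : ZMod k, ∑ q : ZMod k, ((cycDist k p q : ℝ))^2 ≤ Dm := by
    intro p
    have hcast : ∑ q : ZMod k, ((cycDist k p q : ℝ))^2
        = ((∑ q : ZMod k, (cycDist k p q)^2 : ℕ) : ℝ) := by push_cast; rfl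
    rw [hcast, sum_cycDist_sq_nat]
    have h2' := min_sq_sum_bound k (by omega)
    have h3' : ((12:ℝ)) * ((∑ t ∈ Finset.range k, (min t (k-t))^2 : ℕ):ℝ)
        ≤ (k:ℝ)^3 + 2*(k:ℝ) := by exact_mod_cast h2'
    rw [hDm]; linarith
  -- Cauchy–Schwarz: (U p)² ≤ Dm * T p
  have hU : ∀ p : ZMod k, (U p)^2 ≤ Dm * T p := by
    intro p
    have hCS := Finset.sum_mul_sq_le_sq_mul_sq Finset.univ
      (fun q : ZMod k => ((cycDist k p q : ℝ)))
      (fun q : ZMod k => if p ≠ q then (φ q - φ p)/((cycDist k p q:ℝ)) else 0)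
    have hfg : ∑ q : ZMod k, ((cycDist k p q : ℝ)) *
        (if p ≠ q then (φ q - φ p)/((cycDist k p q:ℝ)) else 0) = U p := by
      rw [hUdef]
      apply Finset.sum_congr rfl
      intro q _
      by_cases h : p = q
      · subst h; simp
      · rw [if_pos h]
        have hd : ((cycDist k p q : ℝ)) ≠ 0 := by
          have := cycDist_pos k h
          positivity
        field_simp
    have hg2 : ∑ q : ZMod k,
        (if p ≠ q then (φ q - φ p)/((cycDist k p q:ℝ)) else 0)^2 = T p := by
      rw [hTdef]
      apply Finset.sum_congr rfl
      intro q _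
      by_cases h : p ≠ q
      · rw [if_pos h, if_pos h]
        ring
      · rw [if_neg h, if_neg h]
        ring
    rw [hfg, hg2] at hCS
    calc (U p)^2 ≤ (∑ q : ZMod k, ((cycDist k p q : ℝ))^2) * T p := hCS
      _ ≤ Dm * T p := mul_le_mul_of_nonneg_right (hDsum p) (hT0 p)
  -- global average minus value
  have hUp : ∀ p, globalAvg k φ - φ p = (1/(k:ℝ)) * U p := by
    intro p
    rw [globalAvg, hUdef]
    simp only
    rw [Finset.sum_sub_distrib, Finset.sum_const, Finset.card_univ, ZMod.card]
    field_simp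
    rw [nsmul_eq_mul]
  have hshift : ∀ h : ZMod k, ∑ i : ZMod k, T (i + h) = 2*B := by
    intro h
    rw [← hTsum]
    exact Fintype.sum_equiv (Equiv.addRight h) _ _ (fun i => rfl)
  -- per-j bound on the sum over i
  have step2 : ∀ j ∈ Finset.Icc 1 (ℓ-1),
      ∑ i : ZMod k, (globalAvg k φ - localAvg k φ i j)^2 ≤ 2 * Dm * B / (k:ℝ)^2 := by
    intro j hj
    simp only [Finset.mem_Icc] at hj
    have hj1 : 1 ≤ j := hj.1
    have hjR : (1:ℝ) ≤ (j:ℝ) := by exact_mod_cast hj1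
    have h2jpos : (0:ℝ) < 2*(j:ℝ)-1 := by linarith
    set I := Finset.Icc (-(j:ℤ) + 1) ((j:ℤ) - 1) with hI
    have hcard : I.card = 2*j - 1 := by
      rw [hI, Int.card_Icc]
      omega
    have hcardR : (I.card : ℝ) = 2*(j:ℝ) - 1 := by
      rw [hcard, Nat.cast_sub (by omega : 1 ≤ 2*j)]
      push_cast
      ring
    -- express the deviation
    have havg : ∀ i : ZMod k, globalAvg k φ - localAvg k φ i j
        = (1/(2*(j:ℝ)-1)) * ∑ h ∈ I, (globalAvg k φ - φ (i + (h:ZMod k))) := by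
      intro i
      rw [Finset.sum_sub_distrib, Finset.sum_const, localAvg, nsmul_eq_mul, hcardR]
      field_simp
      ring
    have step1 : ∀ i : ZMod k, (globalAvg k φ - localAvg k φ i j)^2
        ≤ (1/(2*(j:ℝ)-1)) * ((1/(k:ℝ)^2) * Dm * ∑ h ∈ I, T (i + (h:ZMod k))) := by
      intro i
      rw [havg i, mul_pow]
      have hCS2 : (∑ h ∈ I, (globalAvg k φ - φ (i + (h:ZMod k))))^2
          ≤ (I.card : ℝ) * ∑ h ∈ I, (globalAvg k φ - φ (i + (h:ZMod k)))^2 :=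
        sq_sum_le_card_mul_sum_sq
      have hsum2 : ∑ h ∈ I, (globalAvg k φ - φ (i + (h:ZMod k)))^2
          ≤ (1/(k:ℝ)^2) * Dm * ∑ h ∈ I, T (i + (h:ZMod k)) := by
        rw [Finset.mul_sum]
        apply Finset.sum_le_sum
        intro h _
        rw [hUp]
        have := hU (i + (h:ZMod k))
        rw [mul_pow]
        have hk2 : (0:ℝ) < (k:ℝ)^2 := by positivity
        calc (1/(k:ℝ))^2 * (U (i + (h:ZMod k)))^2
            ≤ (1/(k:ℝ))^2 * (Dm * T (i + (h:ZMod k))) := by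
              apply mul_le_mul_of_nonneg_left this (by positivity)
          _ = 1/(k:ℝ)^2 * Dm * T (i + (h:ZMod k)) := by ring
      calc (1/(2*(j:ℝ)-1))^2 * (∑ h ∈ I, (globalAvg k φ - φ (i + (h:ZMod k))))^2
          ≤ (1/(2*(j:ℝ)-1))^2 * ((I.card : ℝ) * ∑ h ∈ I, (globalAvg k φ - φ (i + (h:ZMod k)))^2) := by
            apply mul_le_mul_of_nonneg_left hCS2 (by positivity)
        _ ≤ (1/(2*(j:ℝ)-1))^2 * ((I.card : ℝ) * ((1/(k:ℝ)^2) * Dm * ∑ h ∈ I, T (i + (h:ZMod k)))) := by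
            apply mul_le_mul_of_nonneg_left _ (by positivity)
            apply mul_le_mul_of_nonneg_left hsum2 (by positivity)
        _ = (1/(2*(j:ℝ)-1)) * ((1/(k:ℝ)^2) * Dm * ∑ h ∈ I, T (i + (h:ZMod k))) := by
            rw [hcardR]
            field_simp
    calc ∑ i : ZMod k, (globalAvg k φ - localAvg k φ i j)^2
        ≤ ∑ i : ZMod k, (1/(2*(j:ℝ)-1)) * ((1/(k:ℝ)^2) * Dm * ∑ h ∈ I, T (i + (h:ZMod k))) :=
          Finset.sum_le_sum fun i _ => step1 i
      _ = (1/(2*(j:ℝ)-1)) * ((1/(k:ℝ)^2) * Dm * ∑ h ∈ I, ∑ i : ZMod k, T (i + (h:ZMod k))) := by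
          rw [← Finset.mul_sum, ← Finset.mul_sum, Finset.sum_comm]
      _ = (1/(2*(j:ℝ)-1)) * ((1/(k:ℝ)^2) * Dm * ((2*(j:ℝ)-1) * (2*B))) := by
          have hconst : ∑ h ∈ I, ∑ i : ZMod k, T (i + (h:ZMod k)) = (2*(j:ℝ)-1) * (2*B) := by
            have e1 : ∑ h ∈ I, ∑ i : ZMod k, T (i + (h:ZMod k)) = ∑ _h ∈ I, (2*B) :=
              Finset.sum_congr rfl fun h _ => hshift ((h : ZMod k))
            rw [e1, Finset.sum_const, hcard, nsmul_eq_mul, Nat.cast_sub (by omega : 1 ≤ 2*j)]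
            push_cast; ring
          rw [hconst]
      _ = 2 * Dm * B / (k:ℝ)^2 := by
          field_simp
  -- put everything together
  have hcardL : ((Finset.Icc 1 (ℓ-1)).card : ℝ) = (ℓ:ℝ) - 1 := by
    have hc : (Finset.Icc 1 (ℓ-1)).card = ℓ - 1 := by rw [Nat.card_Icc]; omega
    rw [hc, Nat.cast_sub (by omega : 1 ≤ ℓ), Nat.cast_one]
  have hl2R : (2:ℝ) ≤ (ℓ:ℝ) := by exact_mod_cast hℓ
  have hlpos : (0:ℝ) < (ℓ:ℝ) - 1 := by linarith
  have hc1 : (k:ℝ) + 1 ≤ 2*(c:ℝ)*(ℓ:ℝ) := by exact_mod_cast (by omega : k + 1 ≤ 2*c*ℓ)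
  have hl4 : 4*(ℓ:ℝ) < (k:ℝ) := by exact_mod_cast h1
  have key : (k:ℝ)^3 + 2*(k:ℝ) ≤ 6*(c:ℝ)*(k:ℝ)^2*((ℓ:ℝ)-1) := by
    nlinarith [mul_nonneg (mul_nonneg (sub_nonneg.mpr hc1) (sq_nonneg (k:ℝ))) hlpos.le,
      mul_pos (sub_pos.mpr hl4) hkpos,
      mul_nonneg (by linarith : (0:ℝ) ≤ (ℓ:ℝ) - 2) (by positivity : (0:ℝ) ≤ (k:ℝ)^3),
      mul_nonneg (sq_nonneg (k:ℝ)) (by linarith : (0:ℝ) ≤ (k:ℝ) - 9),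
      mul_pos hlpos hkpos]
  rw [Finset.sum_comm]
  calc ∑ j ∈ Finset.Icc 1 (ℓ-1), ∑ i : ZMod k,
        ((globalAvg k φ - localAvg k φ i j) / ((ℓ:ℝ) - 1)) ^ 2
      = ∑ j ∈ Finset.Icc 1 (ℓ-1), (1/((ℓ:ℝ)-1)^2) *
          ∑ i : ZMod k, (globalAvg k φ - localAvg k φ i j) ^ 2 := by
        apply Finset.sum_congr rfl
        intro j _
        rw [Finset.mul_sum]
        apply Finset.sum_congr rfl
        intro i _
        rw [div_pow]
        ring
    _ ≤ ∑ j ∈ Finset.Icc 1 (ℓ-1), (1/((ℓ:ℝ)-1)^2) * (2 * Dm * B / (k:ℝ)^2) := by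
        apply Finset.sum_le_sum
        intro j hj
        exact mul_le_mul_of_nonneg_left (step2 j hj) (by positivity)
    _ = ((ℓ:ℝ)-1) * ((1/((ℓ:ℝ)-1)^2) * (2 * Dm * B / (k:ℝ)^2)) := by
        rw [Finset.sum_const, nsmul_eq_mul, hcardL]
    _ = (((k:ℝ)^3 + 2*(k:ℝ))/6) * B / ((k:ℝ)^2 * ((ℓ:ℝ)-1)) := by
        rw [hDm]
        field_simp
        ring
    _ ≤ (c:ℝ) * B := by
        rw [div_le_iff₀ (by positivity)]
        nlinarith [mul_le_mul_of_nonneg_right key hB0]
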